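/- arXiv:math/0609828 — 4 statements merged into one kernel-verified Lean document; each statement's English description precedes it below -/
import Mathlib

section
/- Let $(A,A+1,\dots,B)$ and $(C,C+1,\dots,D)$ be two strings of consecutive real numbers with $A - C \in \mathbb{Z}$. If the two strings are not nested, i.e. neither one's interval contains the other's and they are not separated by a gap of more than 1 (so either $A < C \le B < D$, or $C = B+1$, up to swapping the strings), then the multiset of entries of the two strings can be rearranged into two new strings $(A,\dots,D)$ and $(C,\dots,B)$ (in the overlapping case) or into the single string $(A,\dots,B,B+1,\dots,D)$ (in the adjacent case), whose lengths strictly dominate the original pair of lengths in the dominance order. -/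
/-- The multiset of entries of the string `(a, a+1, …, a+ℓ-1)`. -/
def strM (a : ℝ) (ℓ : ℕ) : Multiset ℝ := (Multiset.range ℓ).map (fun j => a + j)

lemma strM_eq (a : ℝ) (ℓ : ℕ) :
    strM a ℓ = (Multiset.range ℓ).map (fun j : ℕ => a + (j : ℝ)) := by
  unfold strM
  rw [show (do let a ← Multiset.range ℓ; pure (a : ℝ)) =
        (Multiset.range ℓ).map (fun j : ℕ => (j : ℝ)) from Multiset.bind_singleton _ _,
    Multiset.map_map]
  rfl

lemma strM_add (a : ℝ) (m n : ℕ) : strM a (m + n) = strM a m + strM (a + m) n := by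
  simp only [strM_eq]
  rw [Multiset.range_add]
  simp only [Multiset.map_add, Multiset.map_map]
  congr 1
  apply Multiset.map_congr rfl
  intro x _
  simp only [Function.comp_apply]
  push_cast
  ring

/-- Two strings `(A,…,B)` (length `ℓ₁`) and `(C,…,D)` (length `ℓ₂`) with
`C = A + d`, `d ∈ ℤ`, `d ≥ 1` (so `A < C`, up to swapping the strings).  If they are not
nested, i.e. `A < C ≤ B < D` (overlapping case, `d < ℓ₁` and `ℓ₁ < d + ℓ₂`) or `C = B + 1`
(adjacent case, `d = ℓ₁`), then the multiset of entries rearranges into the strings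
`(A,…,D)` and `(C,…,B)`, resp. the single string `(A,…,D)`, whose lengths strictly dominate
the original pair of lengths in the dominance order (same total, strictly larger maximum). -/
theorem stmt_1 (A : ℝ) (ℓ₁ ℓ₂ d : ℕ) (h1 : 1 ≤ ℓ₁) (h2 : 1 ≤ ℓ₂) (hd : 1 ≤ d) :
    (d < ℓ₁ ∧ ℓ₁ < d + ℓ₂ →
      strM A ℓ₁ + strM (A + d) ℓ₂ = strM A (d + ℓ₂) + strM (A + d) (ℓ₁ - d) ∧
        max ℓ₁ ℓ₂ < max (d + ℓ₂) (ℓ₁ - d)) ∧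
    (d = ℓ₁ →
      strM A ℓ₁ + strM (A + d) ℓ₂ = strM A (ℓ₁ + ℓ₂) ∧ max ℓ₁ ℓ₂ < ℓ₁ + ℓ₂) := by
  constructor
  · rintro ⟨hdl, hlt⟩
    obtain ⟨e, rfl⟩ : ∃ e, ℓ₁ = d + e := ⟨ℓ₁ - d, by omega⟩
    constructor
    · rw [strM_add A d e, strM_add A d ℓ₂]
      have : d + e - d = e := by omega
      rw [this]
      abel
    · simp only [max_lt_iff, lt_max_iff]
      omega
  · rintro rfl
    exact ⟨(strM_add A d ℓ₂).symm, by omega⟩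
end

section
/- Given a finite multiset of real numbers all congruent to each other modulo $\mathbb{Z}$, the following greedy procedure produces a nested set of strings: repeatedly extract the longest string (maximal sequence of consecutive values, each taken once) starting with the smallest remaining element, until no elements remain. Moreover, up to reordering of strings, this is the unique decomposition of the multiset into nested strings. -/
/-- The multiset of entries of a string given by its start and its length. -/
def strEntries (s : ℝ × ℕ) : Multiset ℝ := (Multiset.range s.2).map (fun j => s.1 + j)

/-- The multiset of all entries of a collection of strings. -/
def entries (D : Multiset (ℝ × ℕ)) : Multiset ℝ := D.bind strEntries

/-- A collection of strings is nested if for any two of them whose entries differ by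
integers, with endpoints `(a₁,b₁)` and `(a₂,b₂)` (where `b = a + ℓ - 1`), one has
`a₁ ≤ a₂ ≤ b₂ ≤ b₁`, or `a₂ ≤ a₁ ≤ b₁ ≤ b₂`, or `b₁ + 1 < a₂`, or `b₂ + 1 < a₁`. -/
def NestedD (D : Multiset (ℝ × ℕ)) : Prop :=
  ∀ s ∈ D, ∀ t ∈ D, (∃ z : ℤ, s.1 - t.1 = (z : ℝ)) →
    (s.1 ≤ t.1 ∧ t.1 + (t.2 : ℝ) ≤ s.1 + (s.2 : ℝ)) ∨
    (t.1 ≤ s.1 ∧ s.1 + (s.2 : ℝ) ≤ t.1 + (t.2 : ℝ)) ∨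
    (s.1 + (s.2 : ℝ) < t.1) ∨ (t.1 + (t.2 : ℝ) < s.1)

lemma mem_strEntries {s : ℝ × ℕ} {x : ℝ} :
    x ∈ strEntries s ↔ ∃ j : ℕ, j < s.2 ∧ s.1 + (j : ℝ) = x := by
  simp [strEntries, Multiset.mem_map, Multiset.mem_range]

lemma strEntries_eq (s : ℝ × ℕ) :
    strEntries s = (Multiset.range s.2).map (fun j : ℕ => s.1 + (j : ℝ)) := by
  simp [strEntries]

lemma strEntries_nodup' (s : ℝ × ℕ) : (strEntries s).Nodup := by
  rw [strEntries_eq]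
  refine Multiset.Nodup.map (f := fun j : ℕ => s.1 + (j : ℝ)) ?_ (Multiset.nodup_range s.2)
  intro i j h
  have : (i : ℝ) = j := by dsimp at h; linarith
  exact_mod_cast this

lemma mem_entries {D : Multiset (ℝ × ℕ)} {x : ℝ} :
    x ∈ entries D ↔ ∃ s ∈ D, x ∈ strEntries s := Multiset.mem_bind

lemma start_mem {s : ℝ × ℕ} (h : 0 < s.2) : s.1 ∈ strEntries s :=
  mem_strEntries.2 ⟨0, h, by simp⟩

lemma start_mem_entries {D : Multiset (ℝ × ℕ)} {s : ℝ × ℕ} (hs : s ∈ D) (h : 0 < s.2) :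
    s.1 ∈ entries D := mem_entries.2 ⟨s, hs, start_mem h⟩

lemma strEntries_nodup (s : ℝ × ℕ) : (strEntries s).Nodup := strEntries_nodup' s

lemma strEntries_card (s : ℝ × ℕ) : (strEntries s).card = s.2 := by
  simp [strEntries]

/-- key helper: a string `t` (congruent to `a` mod ℤ) none of whose entries equals `a+ℓ`,
starting at `≥ a`, either ends by `a+ℓ` or starts after `a+ℓ`. -/
lemma helper (a : ℝ) (ℓ : ℕ) (t : ℝ × ℕ) (ht1 : a ≤ t.1)
    (hz : ∃ z : ℤ, t.1 - a = (z : ℝ))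
    (hnot : ∀ j : ℕ, j < t.2 → t.1 + (j : ℝ) ≠ a + ℓ) :
    t.1 + (t.2 : ℝ) ≤ a + ℓ ∨ a + (ℓ : ℝ) < t.1 := by
  by_contra h
  push_neg at h
  obtain ⟨h1, h2⟩ := h
  obtain ⟨z, hz⟩ := hz
  have hz0 : 0 ≤ z := by
    have : (0 : ℝ) ≤ (z : ℝ) := by linarith
    exact_mod_cast this
  have hzl : z ≤ (ℓ : ℤ) := by
    have : (z : ℝ) ≤ (ℓ : ℝ) := by linarith
    exact_mod_cast this
  set k := z.toNat with hk
  have hkr : (k : ℝ) = (z : ℝ) := by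
    rw [hk]; exact_mod_cast Int.toNat_of_nonneg hz0
  have hkl : k ≤ ℓ := by omega
  have hcast : ((ℓ - k : ℕ) : ℝ) = (ℓ : ℝ) - (k : ℝ) := by
    push_cast [Nat.cast_sub hkl]; ring
  have heq : t.1 + ((ℓ - k : ℕ) : ℝ) = a + ℓ := by rw [hcast]; linarith
  have hlt : ((ℓ - k : ℕ) : ℝ) < (t.2 : ℝ) := by linarith
  exact hnot (ℓ - k) (by exact_mod_cast hlt) heq

/-- In any nested positive decomposition of `M`, the string `(a, ℓ)` (min, greedy length)
appears. -/
lemma max_string_mem (M : Multiset ℝ) (hM : ∀ x ∈ M, ∀ y ∈ M, ∃ z : ℤ, x - y = (z : ℝ))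
    (a : ℝ) (ℓ : ℕ) (hmin : ∀ x ∈ M, a ≤ x)
    (hall : ∀ j : ℕ, j < ℓ → a + (j : ℝ) ∈ M) (hnot : a + (ℓ : ℝ) ∉ M) (hℓ : 0 < ℓ)
    (D : Multiset (ℝ × ℕ)) (hpos : ∀ s ∈ D, 0 < s.2) (hent : entries D = M)
    (hnest : NestedD D) : (a, ℓ) ∈ D := by
  have haM : a ∈ M := by simpa using hall 0 hℓ
  obtain ⟨s, hsD, hsa⟩ := mem_entries.1 (hent ▸ haM)
  have hs1 : s.1 = a := by
    obtain ⟨j, hj, hja⟩ := mem_strEntries.1 hsa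
    have h1 : s.1 ≤ a := by
      have : (0:ℝ) ≤ (j:ℝ) := by positivity
      linarith
    have h2 : a ≤ s.1 := hmin _ (hent ▸ start_mem_entries hsD (hpos s hsD))
    linarith
  -- take a string starting at a of maximal length
  classical
  set F := D.filter (fun t => t.1 = a) with hF
  have hsF : s ∈ F := Multiset.mem_filter.2 ⟨hsD, hs1⟩
  set T := F.toFinset.image Prod.snd with hT
  have hTne : T.Nonempty := ⟨s.2, Finset.mem_image.2 ⟨s, Multiset.mem_toFinset.2 hsF, rfl⟩⟩
  set m := T.max' hTne with hm
  obtain ⟨t, htT, ht2⟩ := Finset.mem_image.1 (T.max'_mem hTne)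
  have htF : t ∈ F := Multiset.mem_toFinset.1 htT
  have htD : t ∈ D := (Multiset.mem_filter.1 htF).1
  have ht1 : t.1 = a := (Multiset.mem_filter.1 htF).2
  have hmax : ∀ u ∈ D, u.1 = a → u.2 ≤ m :=
    fun u huD hu1 => Finset.le_max' T u.2
      (Finset.mem_image.2 ⟨u, Multiset.mem_toFinset.2 (Multiset.mem_filter.2 ⟨huD, hu1⟩), rfl⟩)
  -- m ≤ ℓ
  have hmle : m ≤ ℓ := by
    by_contra hc
    push_neg at hc
    exact hnot (hent ▸ mem_entries.2 ⟨t, htD,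
      mem_strEntries.2 ⟨ℓ, by omega, by rw [ht1]⟩⟩)
  -- ℓ ≤ m
  have hlem : ℓ ≤ m := by
    by_contra hc
    push_neg at hc
    have ham : a + (m : ℝ) ∈ M := hall m hc
    obtain ⟨u, huD, hum⟩ := mem_entries.1 (hent ▸ ham)
    obtain ⟨j, hj, hju⟩ := mem_strEntries.1 hum
    have hu1M : u.1 ∈ M := hent ▸ start_mem_entries huD (hpos u huD)
    have hu1a : a ≤ u.1 := hmin _ hu1M
    obtain ⟨z, hzz⟩ := hM a haM u.1 hu1M
    have := hnest t htD u huD ⟨z, by rw [ht1]; exact hzz⟩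
    have hjr : (j : ℝ) < (u.2 : ℝ) := by exact_mod_cast hj
    rcases this with ⟨_, h2⟩ | ⟨h1, _⟩ | h | h
    · rw [ht1, ht2] at h2; linarith
    · rw [ht1] at h1
      have hu1 : u.1 = a := le_antisymm h1 hu1a
      have : u.2 ≤ m := hmax u huD hu1
      rw [hu1] at hju
      have : (j : ℝ) = (m : ℝ) := by linarith
      have : j = m := by exact_mod_cast this
      omega
    · rw [ht1, ht2] at h
      have : (0:ℝ) ≤ (j:ℝ) := by positivity
      linarith
    · rw [ht1] at h
      have : (0:ℝ) ≤ (u.2:ℝ) := by positivity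
      linarith
  have : t = (a, ℓ) := Prod.ext ht1 (by omega)
  rwa [this] at htD

/-- a finite multiset of real numbers, all congruent to each other modulo ℤ,
admits a decomposition into a nested set of strings (the one produced by the greedy
procedure of repeatedly extracting the longest string starting with the smallest remaining
element), and moreover this nested decomposition is unique up to reordering of the strings
(i.e. unique as a multiset of strings). -/
theorem stmt_2 (M : Multiset ℝ) (hM : ∀ x ∈ M, ∀ y ∈ M, ∃ z : ℤ, x - y = (z : ℝ)) :
    (∃ D : Multiset (ℝ × ℕ), (∀ s ∈ D, 0 < s.2) ∧ entries D = M ∧ NestedD D) ∧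
    (∀ D₁ D₂ : Multiset (ℝ × ℕ),
      (∀ s ∈ D₁, 0 < s.2) → entries D₁ = M → NestedD D₁ →
      (∀ s ∈ D₂, 0 < s.2) → entries D₂ = M → NestedD D₂ → D₁ = D₂) := by
  classical
  induction M using Multiset.strongInductionOn with
  | ih M ih =>
  by_cases hM0 : M = 0
  · subst hM0
    constructor
    · exact ⟨0, by simp, by simp [entries], fun s hs => by simp at hs⟩
    · intro D₁ D₂ hpos₁ hent₁ _ hpos₂ hent₂ _
      have h0 : ∀ (D : Multiset (ℝ × ℕ)), (∀ s ∈ D, 0 < s.2) → entries D = 0 → D = 0 := by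
        intro D hpos hent
        rw [Multiset.eq_zero_iff_forall_notMem]
        intro s hs
        have := start_mem_entries hs (hpos s hs)
        rw [hent] at this
        simp at this
      rw [h0 D₁ hpos₁ hent₁, h0 D₂ hpos₂ hent₂]
  · -- min element
    have hMne : M.toFinset.Nonempty := by
      rw [Finset.nonempty_iff_ne_empty]
      simpa [Multiset.toFinset_eq_empty] using hM0
    set a := M.toFinset.min' hMne with ha
    have haM : a ∈ M := Multiset.mem_toFinset.1 (M.toFinset.min'_mem hMne)
    have hmin : ∀ x ∈ M, a ≤ x := fun x hx => M.toFinset.min'_le x (Multiset.mem_toFinset.2 hx)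
    -- greedy length
    have hex : ∃ n : ℕ, a + (n : ℝ) ∉ M := by
      by_contra hc
      push_neg at hc
      have hle : (Multiset.range (M.card + 1)).map (fun n : ℕ => a + (n : ℝ)) ≤ M := by
        refine (Multiset.le_iff_subset ?_).2 ?_
        · refine Multiset.Nodup.map (f := fun n : ℕ => a + (n : ℝ)) ?_ (Multiset.nodup_range _)
          intro i j h
          have : (i : ℝ) = j := by dsimp at h; linarith
          exact_mod_cast this
        · intro x hx
          obtain ⟨n, _, rfl⟩ := Multiset.mem_map.1 hx
          exact hc n
      have := Multiset.card_le_card hle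
      simp at this
    set ℓ := Nat.find hex with hℓdef
    have hnot : a + (ℓ : ℝ) ∉ M := Nat.find_spec hex
    have hall : ∀ j : ℕ, j < ℓ → a + (j : ℝ) ∈ M := by
      intro j hj
      by_contra hc
      have hj' : j < Nat.find hex := hℓdef ▸ hj
      exact Nat.find_min hex hj' hc
    have hℓpos : 0 < ℓ := by
      rcases Nat.eq_zero_or_pos ℓ with h | h
      · exfalso; apply hnot; rw [h]; simpa using haM
      · exact h
    -- the greedy string is a sub-multiset
    have hsub : strEntries (a, ℓ) ≤ M := by
      refine (Multiset.le_iff_subset (strEntries_nodup _)).2 ?_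
      intro x hx
      obtain ⟨j, hj, rfl⟩ := mem_strEntries.1 hx
      exact hall j hj
    set M' := M - strEntries (a, ℓ) with hM'def
    have hMeq : strEntries (a, ℓ) + M' = M := add_tsub_cancel_of_le hsub
    have hM'le : M' ≤ M := tsub_le_self
    have hM'lt : M' < M := by
      refine lt_of_le_of_ne hM'le ?_
      intro h
      have hc := Multiset.card_sub hsub
      rw [← hM'def, h, strEntries_card] at hc
      have := Multiset.card_le_card hsub
      rw [strEntries_card] at this
      have hMc : 0 < M.card := Multiset.card_pos.2 hM0
      omega
    have hM' : ∀ x ∈ M', ∀ y ∈ M', ∃ z : ℤ, x - y = (z : ℝ) := fun x hx y hy =>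
      hM x (Multiset.mem_of_le hM'le hx) y (Multiset.mem_of_le hM'le hy)
    obtain ⟨⟨D', hpos', hent', hnest'⟩, huniq'⟩ := ih M' hM'lt hM'
    -- facts about strings over M'
    have hstr : ∀ t ∈ D', a ≤ t.1 ∧ (∀ j : ℕ, j < t.2 → t.1 + (j : ℝ) ≠ a + ℓ) := by
      intro t ht
      constructor
      · exact hmin _ (Multiset.mem_of_le hM'le (hent' ▸ start_mem_entries ht (hpos' t ht)))
      · intro j hj hjeq
        apply hnot
        apply Multiset.mem_of_le hM'le
        rw [← hent']
        exact mem_entries.2 ⟨t, ht, mem_strEntries.2 ⟨j, hj, hjeq⟩⟩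
    constructor
    · -- existence
      refine ⟨(a, ℓ) ::ₘ D', ?_, ?_, ?_⟩
      · intro s hs
        rcases Multiset.mem_cons.1 hs with h | h
        · rw [h]; exact hℓpos
        · exact hpos' s h
      · rw [entries, Multiset.cons_bind, ← entries, hent']; exact hMeq
      · intro s hs t ht hz
        rcases Multiset.mem_cons.1 hs with hs' | hs' <;> rcases Multiset.mem_cons.1 ht with ht' | ht'
        · rw [hs', ht']; left; exact ⟨le_refl _, le_refl _⟩
        · -- s = (a,ℓ), t ∈ D'
          subst hs'
          obtain ⟨ht1, htnot⟩ := hstr t ht'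
          obtain ⟨z, hzz⟩ := hz
          have hz' : ∃ z : ℤ, t.1 - a = (z : ℝ) := ⟨-z, by push_cast; simp only at hzz; linarith⟩
          rcases helper a ℓ t ht1 hz' htnot with h | h
          · left; exact ⟨ht1, h⟩
          · right; right; left; exact h
        · -- t = (a,ℓ), s ∈ D'
          subst ht'
          obtain ⟨hs1, hsnot⟩ := hstr s hs'
          obtain ⟨z, hzz⟩ := hz
          have hz' : ∃ z : ℤ, s.1 - a = (z : ℝ) := ⟨z, by simp only at hzz; linarith⟩
          rcases helper a ℓ s hs1 hz' hsnot with h | h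
          · right; left; exact ⟨hs1, h⟩
          · right; right; right; exact h
        · exact hnest' s hs' t ht' hz
    · -- uniqueness
      intro D₁ D₂ hpos₁ hent₁ hnest₁ hpos₂ hent₂ hnest₂
      have key : ∀ (D : Multiset (ℝ × ℕ)), (∀ s ∈ D, 0 < s.2) → entries D = M → NestedD D →
          D = (a, ℓ) ::ₘ D.erase (a, ℓ) ∧
          (∀ s ∈ D.erase (a, ℓ), 0 < s.2) ∧ entries (D.erase (a, ℓ)) = M' ∧
          NestedD (D.erase (a, ℓ)) := by
        intro D hpos hent hnest
        have hmem : (a, ℓ) ∈ D :=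
          max_string_mem M hM a ℓ hmin hall hnot hℓpos D hpos hent hnest
        have hD : D = (a, ℓ) ::ₘ D.erase (a, ℓ) := (Multiset.cons_erase hmem).symm
        refine ⟨hD, ?_, ?_, ?_⟩
        · exact fun s hs => hpos s (Multiset.mem_of_mem_erase hs)
        · have : entries D = strEntries (a, ℓ) + entries (D.erase (a, ℓ)) := by
            conv_lhs => rw [hD]
            rw [entries, Multiset.cons_bind, ← entries]
          rw [hent, ← hMeq] at this
          exact (add_left_cancel this).symm
        · exact fun s hs t ht hz =>
            hnest s (Multiset.mem_of_mem_erase hs) t (Multiset.mem_of_mem_erase ht) hz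
      obtain ⟨hD₁, hp₁, he₁, hn₁⟩ := key D₁ hpos₁ hent₁ hnest₁
      obtain ⟨hD₂, hp₂, he₂, hn₂⟩ := key D₂ hpos₂ hent₂ hnest₂
      rw [hD₁, hD₂, huniq' _ _ hp₁ he₁ hn₁ hp₂ he₂ hn₂]
end

section
/- Branching rule for $U(n)$: the restriction of the irreducible representation of $U(n)$ with highest weight $\mu(a_1,\dots,a_n)$ (integers, $a_1 \ge \cdots \ge a_n$) to $U(n-1)\times U(1)$ is the multiplicity-free sum of $\mu(b_1,\dots,b_{n-1}) \otimes \mu(b_n)$ over all integer sequences with $a_1 \ge b_1 \ge a_2 \ge b_2 \ge \cdots \ge b_{n-1} \ge a_n$ and $b_n = \sum_{i=1}^n a_i - \sum_{j=1}^{n-1} b_j$. -/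
noncomputable section

/-- The character of the irreducible representation of `U(m)` with highest weight
`a : Fin m → ℤ` (weakly decreasing), evaluated at a diagonal element with eigenvalues
`x : Fin m → ℂ`, via the Weyl (bialternant) character formula:
`s_a(x) = det(x_i^{a_j + m - 1 - j}) / det(x_i^{m - 1 - j})`. -/
def schurChar (m : ℕ) (x : Fin m → ℂ) (a : Fin m → ℤ) : ℂ :=
  Matrix.det (Matrix.of fun i j : Fin m => x i ^ (a j + ((m : ℤ) - 1 - (j : ℕ)))) /
    Matrix.det (Matrix.of fun i j : Fin m => x i ^ ((m : ℤ) - 1 - (j : ℕ)))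

open Finset in

private lemma zpow_prod_aux (t : ℂ) (ht : t ≠ 0) {ι : Type*} (s : Finset ι) (g : ι → ℤ) :
    ∏ k ∈ s, t ^ g k = t ^ (∑ k ∈ s, g k) := by
  classical
  induction s using Finset.induction_on with
  | empty => simp
  | insert _ _ hnm ih =>
      rw [Finset.prod_insert hnm, Finset.sum_insert hnm, ih, ← zpow_add₀ ht]

private lemma geom_aux (r : ℂ) (hr : r ≠ 0) (u v : ℤ) (h : u ≤ v) :
    (1 - r) * ∑ f ∈ Finset.Icc u (v - 1), r ^ f = r ^ u - r ^ v := by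
  refine Int.le_induction
    (motive := fun w _ => (1 - r) * ∑ f ∈ Finset.Icc u (w - 1), r ^ f = r ^ u - r ^ w) ?_ ?_ v h
  · show (1 - r) * ∑ f ∈ Finset.Icc u (u - 1), r ^ f = r ^ u - r ^ u
    rw [Finset.Icc_eq_empty (by omega)]; simp
  · intro v hv ih
    show (1 - r) * ∑ f ∈ Finset.Icc u (v + 1 - 1), r ^ f = r ^ u - r ^ (v + 1)
    have hins : Finset.Icc u (v + 1 - 1) = insert v (Finset.Icc u (v - 1)) := by
      ext f; simp only [Finset.mem_Icc, Finset.mem_insert]; omega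
    rw [hins, Finset.sum_insert (by simp)]
    have h1 : r ^ (v + 1) = r ^ v * r := zpow_add_one₀ hr v
    linear_combination ih + h1

open Finset in

private lemma det_ones_row (n : ℕ) (M : Matrix (Fin (n + 1)) (Fin (n + 1)) ℂ)
    (h1 : ∀ k, M (Fin.last n) k = 1) :
    M.det = Matrix.det (Matrix.of fun i j : Fin n =>
      M i.castSucc j.castSucc - M i.castSucc j.succ) := by
  classical
  set U : Matrix (Fin (n + 1)) (Fin (n + 1)) ℂ :=
    Matrix.of fun j k => if j = k then 1 else if (j : ℕ) = (k : ℕ) + 1 then -1 else 0 with hU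
  have hUtri : U.BlockTriangular OrderDual.toDual := by
    intro i j hij
    have hlt : i < j := hij
    have h1' : i ≠ j := ne_of_lt hlt
    have h2' : (i : ℕ) ≠ (j : ℕ) + 1 := by
      have := (Fin.lt_iff_val_lt_val.mp hlt); omega
    simp [hU, h1', h2']
  have hdetU : U.det = 1 := by
    rw [Matrix.det_of_lowerTriangular U hUtri]
    simp [hU]
  have key : ∀ (i : Fin (n + 1)) (k : Fin n),
      (M * U) i k.castSucc = M i k.castSucc - M i k.succ := by
    intro i k
    rw [Matrix.mul_apply]
    have hker : ∀ j, M i j * U j k.castSucc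
        = (if j = k.castSucc then M i j else 0) + (if j = k.succ then -(M i j) else 0) := by
      intro j
      by_cases hjc : j = k.castSucc
      · subst hjc
        have hne : (k.castSucc : Fin (n + 1)) ≠ k.succ := by
          simp [Fin.ext_iff]
        simp [hU, hne]
      · by_cases hjs : j = k.succ
        · subst hjs
          have hne : (k.succ : Fin (n + 1)) ≠ k.castSucc := by
            simp [Fin.ext_iff]
          have hco : ((k.succ : Fin (n + 1)) : ℕ) = (k.castSucc : ℕ) + 1 := by simp
          simp [hU, hne, hco]
        · have hnat : ¬ ((j : ℕ) = (k : ℕ) + 1) := by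
            intro hcon
            exact hjs (Fin.ext (by simpa using hcon))
          simp [hU, hjc, hjs, hnat]
    rw [Finset.sum_congr rfl fun j _ => hker j, Finset.sum_add_distrib,
      Finset.sum_ite_eq' Finset.univ, Finset.sum_ite_eq' Finset.univ]
    simp [sub_eq_add_neg]
  have keyll : (M * U) (Fin.last n) (Fin.last n) = 1 := by
    rw [Matrix.mul_apply]
    have : ∀ j : Fin (n + 1), M (Fin.last n) j * U j (Fin.last n)
        = if j = Fin.last n then 1 else 0 := by
      intro j
      by_cases hj : j = Fin.last n
      · subst hj; simp [hU, h1]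
      · have : ¬ ((j : ℕ) = n + 1) := by
          have := j.is_lt; omega
        simp [hU, hj, this]
    rw [Finset.sum_congr rfl fun j _ => this j, Finset.sum_ite_eq' Finset.univ]
    simp
  have hdet : M.det = (M * U).det := by rw [Matrix.det_mul, hdetU, mul_one]
  rw [hdet, Matrix.det_succ_row _ (Fin.last n)]
  rw [Finset.sum_eq_single (Fin.last n)]
  · have hev : (-1 : ℂ) ^ ((Fin.last n : ℕ) + (Fin.last n : ℕ)) = 1 :=
      Even.neg_one_pow ⟨n, by simp [Fin.last]⟩
    rw [keyll, hev, mul_one, one_mul]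
    congr 1
    ext i j
    simp only [Matrix.submatrix_apply, Fin.succAbove_last, Matrix.of_apply]
    rw [key]
  · intro j _ hj
    obtain ⟨j', rfl⟩ := Fin.exists_castSucc_eq.mpr hj
    rw [key, h1, h1]
    ring
  · simp

open Finset in

private lemma det_pow_matrix (m : ℕ) (y : Fin m → ℂ) :
    Matrix.det (Matrix.of fun i j : Fin m => y i ^ ((m : ℤ) - 1 - (j : ℕ)))
      = Matrix.det (Matrix.vandermonde (y ∘ Fin.rev)) := by
  rw [← Matrix.det_submatrix_equiv_self Fin.revPerm (Matrix.vandermonde (y ∘ Fin.rev))]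
  congr 1
  ext i j
  simp only [Matrix.submatrix_apply, Matrix.vandermonde_apply, Function.comp_apply,
    Fin.revPerm_apply, Fin.rev_rev, Matrix.of_apply]
  rw [← zpow_natCast]
  congr 1
  have := j.is_lt
  rw [Fin.val_rev]
  omega

private lemma vandermonde_split (n : ℕ) (x : Fin (n + 1) → ℂ) :
    Matrix.det (Matrix.of fun i j : Fin (n + 1) => x i ^ ((n + 1 : ℤ) - 1 - (j : ℕ)))
      = Matrix.det (Matrix.of fun i j : Fin n =>
          x i.castSucc ^ ((n : ℤ) - 1 - (j : ℕ)))
        * ∏ i : Fin n, (x i.castSucc - x (Fin.last n)) := by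
  have h1 := det_pow_matrix (n + 1) x
  have h2 := det_pow_matrix n (fun i => x i.castSucc)
  push_cast at h1
  rw [h1, h2, Matrix.det_vandermonde, Matrix.det_vandermonde]
  rw [Fin.prod_univ_succ]
  have hw0 : (x ∘ Fin.rev) 0 = x (Fin.last n) := by
    simp [Fin.rev_zero]
  have hwsucc : ∀ i : Fin n, (x ∘ Fin.rev) i.succ = x (Fin.rev i).castSucc := by
    intro i; simp [Fin.rev_succ]
  rw [Fin.prod_Ioi_zero]
  have hfirst : (∏ j : Fin n, ((x ∘ Fin.rev) j.succ - (x ∘ Fin.rev) 0))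
      = ∏ i : Fin n, (x i.castSucc - x (Fin.last n)) := by
    rw [← Equiv.prod_comp Fin.revPerm (fun i : Fin n => x i.castSucc - x (Fin.last n))]
    exact Finset.prod_congr rfl fun j _ => by rw [hwsucc, hw0]; rfl
  have hrest : (∏ i : Fin n, ∏ j ∈ Finset.Ioi i.succ, ((x ∘ Fin.rev) j - (x ∘ Fin.rev) i.succ))
      = ∏ i : Fin n, ∏ j ∈ Finset.Ioi i,
          (((fun i => x i.castSucc) ∘ Fin.rev) j - ((fun i => x i.castSucc) ∘ Fin.rev) i) := by
    refine Finset.prod_congr rfl fun i _ => ?_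
    rw [Fin.prod_Ioi_succ]
    exact Finset.prod_congr rfl fun j _ => by rw [hwsucc, hwsucc]; rfl
  rw [hfirst, hrest]
  ring

/-- Gelfand–Tsetlin branching rule for `U(n+1)`, stated at the level of
characters, which is equivalent to the decomposition of the restriction of the irreducible
representation: the restriction of the irreducible representation of `U(n+1)` with highest
weight `μ(a₁,…,a_{n+1})` to `U(n) × U(1)` is the multiplicity-free sum of
`μ(b₁,…,b_n) ⊗ μ(b_{n+1})` over all integer sequences with
`a₁ ≥ b₁ ≥ a₂ ≥ b₂ ≥ ⋯ ≥ b_n ≥ a_{n+1}` and `b_{n+1} = ∑ a - ∑ b`.  Evaluated on a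
(generic, distinct-eigenvalue, invertible) diagonal element. -/
theorem stmt_13 (n : ℕ) (x : Fin (n + 1) → ℂ) (hx : Function.Injective x)
    (hx0 : ∀ i, x i ≠ 0) (a : Fin (n + 1) → ℤ) (ha : Antitone a) :
    schurChar (n + 1) x a =
      ∑ b ∈ Fintype.piFinset (fun j : Fin n => Finset.Icc (a j.succ) (a j.castSucc)),
        schurChar n (fun i => x i.castSucc) b *
          (x (Fin.last n)) ^ ((∑ i, a i) - ∑ j, b j) := by
  classical
  set t : ℂ := x (Fin.last n) with hts
  set x' : Fin n → ℂ := fun i => x i.castSucc with hx's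
  have ht : t ≠ 0 := hx0 _
  have hx'0 : ∀ i, x' i ≠ 0 := fun i => hx0 _
  have hx't : ∀ i, x' i ≠ t := by
    intro i h
    exact (Fin.castSucc_lt_last i).ne (hx h)
  have hx'inj : Function.Injective x' := fun i j h =>
    Fin.castSucc_injective n (hx h)
  set r : Fin n → ℂ := fun i => x' i / t with hrs
  have hr0 : ∀ i, r i ≠ 0 := fun i => div_ne_zero (hx'0 i) ht
  set e : Fin (n + 1) → ℤ := fun j => a j + ((n : ℤ) - (j : ℕ)) with hes
  set sE : Fin n → ℤ := fun j => (n : ℤ) - 1 - (j : ℕ) with hsE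
  set S := Fintype.piFinset (fun j : Fin n => Finset.Icc (a j.succ) (a j.castSucc)) with hS
  -- matrices and scalars
  set N : ℂ := Matrix.det (Matrix.of fun i j : Fin (n + 1) => x i ^ e j) with hN
  set Dn : ℂ := Matrix.det (Matrix.of fun i j : Fin n => x' i ^ sE j) with hDn
  set P : ℂ := ∏ i : Fin n, (x' i - t) with hP
  set Q : Matrix (Fin n) (Fin n) ℂ :=
    Matrix.of fun i j => r i ^ e j.castSucc - r i ^ e j.succ with hQ
  set C : Matrix (Fin n) (Fin n) ℂ :=
    Matrix.of fun i j => ∑ c ∈ Finset.Icc (a j.succ) (a j.castSucc), r i ^ (c + sE j) with hC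
  set A : (Fin n → ℤ) → ℂ :=
    fun b => Matrix.det (Matrix.of fun i j : Fin n => x' i ^ (b j + sE j)) with hA
  set K : ℤ := (∑ i, a i) + ∑ j, sE j with hK
  -- nonvanishing
  have hDn0 : Dn ≠ 0 := by
    rw [hDn, det_pow_matrix n x']
    rw [Matrix.det_vandermonde_ne_zero_iff]
    exact hx'inj.comp Fin.rev_injective
  have hP0 : P ≠ 0 := Finset.prod_ne_zero_iff.mpr fun i _ => sub_ne_zero.mpr (hx't i)
  -- step: N = t ^ (∑ j, e j) * Q.det
  have hle : ∀ j : Fin n, e j.succ ≤ e j.castSucc := by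
    intro j
    have h1 : a j.succ ≤ a j.castSucc := ha (Fin.castSucc_le_succ j)
    have h2 : ((j.succ : Fin (n + 1)) : ℕ) = (j : ℕ) + 1 := rfl
    have h3 : ((j.castSucc : Fin (n + 1)) : ℕ) = (j : ℕ) := rfl
    simp only [hes, h2, h3]
    push_cast
    omega
  have hNQ : N = t ^ (∑ j, e j) * Q.det := by
    set M : Matrix (Fin (n + 1)) (Fin (n + 1)) ℂ :=
      Matrix.of fun i k => (x i / t) ^ e k with hM
    have hM1 : ∀ k, M (Fin.last n) k = 1 := by
      intro k
      simp only [hM, Matrix.of_apply, ← hts, div_self ht, one_zpow]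
    have hMQ : M.det = Q.det := by
      rw [det_ones_row n M hM1]
      congr 1
    have hMN : M.det = t ^ (-(∑ j, e j)) * N := by
      have : M = Matrix.of fun i k =>
          (fun k => t ^ (-(e k))) k * ((Matrix.of fun i j : Fin (n + 1) => x i ^ e j) i k) := by
        ext i k
        simp only [hM, Matrix.of_apply, div_zpow, zpow_neg]
        rw [div_eq_mul_inv, mul_comm]
      rw [this, Matrix.det_mul_row, zpow_prod_aux t ht, ← Finset.sum_neg_distrib, hN]
    rw [← hMQ, hMN, ← mul_assoc, ← zpow_add₀ ht, add_neg_cancel, zpow_zero, one_mul]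
  -- step A
  have hstepA : ∀ b : Fin n → ℤ,
      A b * t ^ ((∑ i, a i) - ∑ j, b j)
        = t ^ K * Matrix.det (Matrix.of fun i j : Fin n => r i ^ (b j + sE j)) := by
    intro b
    have h1 : (Matrix.of fun i j : Fin n => r i ^ (b j + sE j))
        = Matrix.of fun i j => (fun j => t ^ (-(b j + sE j))) j *
            ((Matrix.of fun i j : Fin n => x' i ^ (b j + sE j)) i j) := by
      ext i j
      simp only [hrs, Matrix.of_apply, div_zpow, zpow_neg]
      rw [div_eq_mul_inv, mul_comm]
    rw [h1, Matrix.det_mul_row, zpow_prod_aux t ht,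
      show (Matrix.of fun i j : Fin n => x' i ^ (b j + sE j)).det = A b from rfl,
      ← mul_assoc, ← zpow_add₀ ht, mul_comm (t ^ (K + ∑ k : Fin n, -(b k + sE k))) (A b)]
    have hexp : K + (∑ k : Fin n, -(b k + sE k)) = (∑ i, a i) - ∑ j, b j := by
      rw [hK, Finset.sum_neg_distrib, Finset.sum_add_distrib]
      ring
    rw [hexp]
  -- step B
  have hstepB : (∑ b ∈ S, Matrix.det (Matrix.of fun i j : Fin n => r i ^ (b j + sE j)))
      = C.det := by
    set g : (j : Fin n) → ℤ → (Fin n → ℂ) := fun j c => fun i => r i ^ (c + sE j) with hg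
    have h1 : ∀ b : Fin n → ℤ,
        Matrix.det (Matrix.of fun i j : Fin n => r i ^ (b j + sE j))
          = Matrix.detRowAlternating (fun j => g j (b j)) := by
      intro b
      rw [← Matrix.det_transpose]
      rfl
    calc (∑ b ∈ S, Matrix.det (Matrix.of fun i j : Fin n => r i ^ (b j + sE j)))
        = ∑ b ∈ Fintype.piFinset (fun j : Fin n => Finset.Icc (a j.succ) (a j.castSucc)),
            Matrix.detRowAlternating (fun j => g j (b j)) :=
          Finset.sum_congr hS fun b _ => h1 b
      _ = Matrix.detRowAlternating
            (fun j => ∑ c ∈ Finset.Icc (a j.succ) (a j.castSucc), g j c) :=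
          ((Matrix.detRowAlternating.toMultilinearMap).map_sum_finset g
            (fun j => Finset.Icc (a j.succ) (a j.castSucc))).symm
      _ = C.det := by
          rw [← Matrix.det_transpose C]
          congr 1
          funext j i
          simp only [Finset.sum_apply]
          rfl
  -- step C
  have hstepC : C.det * P = t ^ (n : ℕ) * Q.det := by
    have hCg : ∀ i j, (t - x' i) * C i j = t * (r i ^ e j.succ - r i ^ e j.castSucc) := by
      intro i j
      have hIcc : Finset.Icc (e j.succ) (e j.castSucc - 1)
          = Finset.map (addRightEmbedding (sE j)) (Finset.Icc (a j.succ) (a j.castSucc)) := by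
        rw [Finset.map_add_right_Icc]
        have h2 : ((j.succ : Fin (n + 1)) : ℕ) = (j : ℕ) + 1 := rfl
        have h3 : ((j.castSucc : Fin (n + 1)) : ℕ) = (j : ℕ) := rfl
        simp only [hes, hsE, h2, h3]
        congr 1 <;> push_cast <;> ring
      have hsum : C i j = ∑ f ∈ Finset.Icc (e j.succ) (e j.castSucc - 1), r i ^ f := by
        rw [hIcc, Finset.sum_map]
        rfl
      have hgeo := geom_aux (r i) (hr0 i) (e j.succ) (e j.castSucc) (hle j)
      have htx : t - x' i = t * (1 - r i) := by
        show t - x' i = t * (1 - x' i / t)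
        rw [mul_sub, mul_one, mul_div_cancel₀ (x' i) ht]
      rw [hsum, htx, mul_assoc, hgeo]
    have hdet1 : Matrix.det (Matrix.of fun i j => (fun i => t - x' i) i * C i j)
        = (∏ i, (t - x' i)) * C.det := Matrix.det_mul_column _ _
    have hdet2 : Matrix.det (Matrix.of fun i j => (fun i => t - x' i) i * C i j)
        = (-t) ^ (n : ℕ) * Q.det := by
      have : (Matrix.of fun i j => (fun i => t - x' i) i * C i j)
          = Matrix.of fun i j => (fun _ : Fin n => -t) i * Q i j := by
        ext i j
        simp only [Matrix.of_apply]
        rw [hCg i j]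
        simp only [hQ, Matrix.of_apply]
        ring
      rw [this, Matrix.det_mul_column]
      simp [Finset.prod_const]
    have hsign : ∏ i, (t - x' i) = (-1 : ℂ) ^ (n : ℕ) * P := by
      have h1 : ∀ i : Fin n, t - x' i = (-1) * (x' i - t) := by intro i; ring
      rw [Finset.prod_congr rfl fun i _ => h1 i, Finset.prod_mul_distrib]
      simp [hP]
    have := hdet1.symm.trans hdet2
    rw [hsign] at this
    have h2 : (-t : ℂ) ^ (n : ℕ) = (-1) ^ (n : ℕ) * t ^ (n : ℕ) := by
      rw [neg_pow]
    rw [h2] at this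
    have h3 : (-1 : ℂ) ^ (n : ℕ) ≠ 0 := pow_ne_zero _ (by norm_num)
    apply mul_left_cancel₀ h3
    rw [← mul_assoc, ← mul_assoc]
    rw [mul_assoc ((-1 : ℂ) ^ (n : ℕ)) P C.det, mul_comm P C.det, ← mul_assoc] at this
    rw [mul_comm ((-1 : ℂ) ^ (n : ℕ)) (t ^ (n : ℕ))] at this ⊢
    rw [mul_assoc, mul_assoc] at this ⊢
    exact this
  -- exponent bookkeeping
  have hKe : K + (n : ℤ) = ∑ j, e j := by
    rw [hK, hes]
    rw [Finset.sum_add_distrib]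
    have h2 : ∑ j : Fin (n + 1), ((n : ℤ) - (j : ℕ)) = (∑ j : Fin n, sE j) + n := by
      rw [Fin.sum_univ_castSucc]
      simp only [Fin.coe_castSucc, Fin.val_last, sub_self, add_zero]
      have h3 : ∀ j : Fin n, ((n : ℤ) - (j : ℕ)) = sE j + 1 := by
        intro j; simp only [hsE]; ring
      rw [Finset.sum_congr rfl fun j _ => h3 j, Finset.sum_add_distrib]
      simp [Finset.card_univ]
    rw [h2]
    ring
  -- final assembly
  have hLHS : schurChar (n + 1) x a = N / (Dn * P) := by
    rw [schurChar]
    have hnum : (Matrix.of fun i j : Fin (n + 1) => x i ^ (a j + (((n + 1 : ℕ) : ℤ) - 1 - (j : ℕ))))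
        = Matrix.of fun i j : Fin (n + 1) => x i ^ e j := by
      ext i j
      simp only [Matrix.of_apply, hes]
      congr 1
      push_cast
      ring
    have hden : Matrix.det (Matrix.of fun i j : Fin (n + 1) => x i ^ (((n + 1 : ℕ) : ℤ) - 1 - (j : ℕ)))
        = Dn * P := by
      have h0 : (Matrix.of fun i j : Fin (n + 1) => x i ^ (((n + 1 : ℕ) : ℤ) - 1 - (j : ℕ)))
          = Matrix.of fun i j : Fin (n + 1) => x i ^ ((n + 1 : ℤ) - 1 - (j : ℕ)) := by
        ext i j
        congr 1
      rw [h0, vandermonde_split n x]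
    rw [hnum, hden, hN]
  have hRHS : ∀ b ∈ S, schurChar n x' b * t ^ ((∑ i, a i) - ∑ j, b j)
      = (A b * t ^ ((∑ i, a i) - ∑ j, b j)) / Dn := by
    intro b _
    rw [schurChar, div_mul_eq_mul_div]
  rw [hLHS, Finset.sum_congr rfl hRHS, ← Finset.sum_div]
  rw [div_eq_div_iff (mul_ne_zero hDn0 hP0) hDn0]
  have hsum : (∑ b ∈ S, A b * t ^ ((∑ i, a i) - ∑ j, b j)) = t ^ K * C.det := by
    rw [Finset.sum_congr rfl fun b _ => hstepA b, ← Finset.mul_sum, hstepB]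
  rw [hsum, hNQ]
  have hfin : t ^ (∑ j, e j) * Q.det = t ^ K * C.det * P := by
    rw [mul_assoc, hstepC, ← mul_assoc, ← zpow_natCast t n, ← zpow_add₀ ht, hKe]
  rw [hfin]
  ring
end
end

section
/- Let $x_0 \le x_1 \le \cdots \le x_{2m}$ be positive integers with $x_i < x_{i+1}$ (strictly increasing) and consider the partition of type C given by $(2x_0, 2x_1, \dots, 2x_{2m})$ (a distinguished nilpotent orbit $\check{\mathcal{O}}$ in $sp$). Define $r_{2i+1} = 2(x_{2m-2i} - x_{2m-2i-1} + 1)$ for $0 \le i \le m-1$, $r_{2i} = 2(x_{2m-2i+1} - x_{2m-2i} - 1)$ for $1 \le i \le m$, and $r_{2m+1} = 2x_0 + 1$. Then the partition $(1^{r_1}, 2^{r_2}, \dots, (2m+1)^{r_{2m+1}})$ is a valid partition of $\sum 2x_i + 1$ (all $r_j \ge 0$), its columns (conjugate partition parts) are exactly $(2x_{2m}+1, 2x_{2m-1}-1, 2x_{2m-2}+1, \dots, 2x_1 - 1, 2x_0+1)$, and every odd part except possibly the largest occurs an even number of times while even parts have the stated multiplicities — i.e., odd parts among $1,3,\dots,2m+1$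 of sizes $< 2m+1$ occur with even multiplicity $r_{2i+1}$, making the resulting orbit smoothly cuspidal in type B. -/
open Finset in
private lemma stmt_15_negpow (a b : ℕ) (h : a % 2 = b % 2) : (-1:ℤ)^a = (-1)^b := by
  conv_lhs => rw [← Nat.div_add_mod a 2]
  conv_rhs => rw [← Nat.div_add_mod b 2]
  rw [pow_add, pow_add, pow_mul, pow_mul, h]
  norm_num

open Finset in
private lemma stmt_15_swap (r : ℕ → ℤ) (N : ℕ) :
    ∑ j ∈ Icc 1 N, (j:ℤ) * r j = ∑ t ∈ Icc 1 N, ∑ j ∈ Icc t N, r j := by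
  induction N with
  | zero => simp
  | succ N ih =>
    rw [Finset.sum_Icc_succ_top (by omega), ih]
    have h1 : ∀ t ∈ Icc 1 (N+1), ∑ j ∈ Icc t (N+1), r j
        = (∑ j ∈ Icc t N, r j) + r (N+1) := by
      intro t ht
      exact Finset.sum_Icc_succ_top (mem_Icc.mp ht).2 _
    rw [Finset.sum_congr rfl h1, Finset.sum_add_distrib, Finset.sum_const,
      Nat.card_Icc, Finset.sum_Icc_succ_top (by omega)]
    have h2 : ∑ j ∈ Icc (N+1) N, r j = 0 := by
      rw [Finset.Icc_eq_empty (by omega)]; simp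
    rw [h2]
    push_cast
    ring

/-- combinatorial core of Proposition 9.5: let `x_0 < x_1 < ⋯ < x_{2m}` be
positive integers, giving the distinguished type C partition `(2x_0, …, 2x_{2m})`.  Define
`r_{2i+1} = 2(x_{2m-2i} - x_{2m-2i-1} + 1)` (`0 ≤ i ≤ m-1`),
`r_{2i} = 2(x_{2m-2i+1} - x_{2m-2i} - 1)` (`1 ≤ i ≤ m`), and `r_{2m+1} = 2x_0 + 1`
(uniformly, `r_j = 2(x_{2m-j+1} - x_{2m-j} + (-1)^{j+1})` for `1 ≤ j ≤ 2m`).  Then: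
all `r_j ≥ 0`; the partition `(1^{r_1}, 2^{r_2}, …, (2m+1)^{r_{2m+1}})` has total size
`∑ 2x_i + 1`; its columns (conjugate partition parts) `c_t = ∑_{j ≥ t} r_j` are exactly
`(2x_{2m}+1, 2x_{2m-1}-1, 2x_{2m-2}+1, …, 2x_1-1, 2x_0+1)`, i.e.
`c_t = 2 x_{2m+1-t} + (-1)^{t+1}`; and every odd part-size `< 2m+1` occurs an even number
of times (`r_{2i+1}` even for `i < m`), so the resulting type B orbit is smoothly cuspidal. -/
theorem stmt_15 (m : ℕ) (x : ℕ → ℕ) (hx0 : 0 < x 0)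
    (hx : ∀ i, i < 2 * m → x i < x (i + 1)) (r : ℕ → ℤ)
    (hr1 : ∀ j, 1 ≤ j → j ≤ 2 * m →
      r j = 2 * ((x (2 * m - j + 1) : ℤ) - (x (2 * m - j) : ℤ) + (-1) ^ (j + 1)))
    (hr2 : r (2 * m + 1) = 2 * (x 0 : ℤ) + 1) :
    (∀ j, 1 ≤ j → j ≤ 2 * m + 1 → 0 ≤ r j) ∧
      (∑ j ∈ Finset.Icc 1 (2 * m + 1), (j : ℤ) * r j
        = 2 * (∑ i ∈ Finset.range (2 * m + 1), (x i : ℤ)) + 1) ∧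
      (∀ t, 1 ≤ t → t ≤ 2 * m + 1 →
        ∑ j ∈ Finset.Icc t (2 * m + 1), r j
          = 2 * (x (2 * m + 1 - t) : ℤ) + (-1) ^ (t + 1)) ∧
      (∀ i, i < m → Even (r (2 * i + 1))) := by
  open Finset in
  -- the column identity, by induction from the top part
  have key : ∀ k, k ≤ 2 * m →
      ∑ j ∈ Icc (2 * m + 1 - k) (2 * m + 1), r j = 2 * (x k : ℤ) + (-1) ^ k := by
    intro k
    induction k with
    | zero =>
      intro _
      simp only [Nat.sub_zero, Finset.Icc_self, Finset.sum_singleton, hr2, pow_zero]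
    | succ k ih =>
      intro hk
      have e1 : 2 * m + 1 - (k + 1) = 2 * m - k := by omega
      rw [e1, Finset.Icc_eq_cons_Ioc (by omega), Finset.sum_cons, ← Finset.Icc_add_one_left_eq_Ioc]
      have e2 : 2 * m - k + 1 = 2 * m + 1 - k := by omega
      rw [e2, ih (by omega), hr1 (2 * m - k) (by omega) (by omega)]
      have e3 : 2 * m - (2 * m - k) + 1 = k + 1 := by omega
      have e4 : 2 * m - (2 * m - k) = k := by omega
      rw [e3, e4, stmt_15_negpow (2 * m - k + 1) (k + 1) (by omega), pow_succ]
      ring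
  have hcol : ∀ t, 1 ≤ t → t ≤ 2 * m + 1 →
      ∑ j ∈ Icc t (2 * m + 1), r j = 2 * (x (2 * m + 1 - t) : ℤ) + (-1) ^ (t + 1) := by
    intro t h1 h2
    have h := key (2 * m + 1 - t) (by omega)
    have e : 2 * m + 1 - (2 * m + 1 - t) = t := by omega
    rw [e] at h
    rw [h, stmt_15_negpow (2 * m + 1 - t) (t + 1) (by omega)]
  refine ⟨?_, ?_, hcol, ?_⟩
  · -- nonnegativity
    intro j h1 h2
    rcases eq_or_lt_of_le h2 with h | h
    · rw [h, hr2]; positivity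
    · have hj : j ≤ 2 * m := by omega
      rw [hr1 j h1 hj]
      have hxx : (x (2 * m - j) : ℤ) < (x (2 * m - j + 1) : ℤ) := by
        exact_mod_cast hx (2 * m - j) (by omega)
      rcases neg_one_pow_eq_or ℤ (j + 1) with h | h <;> rw [h] <;> linarith
  · -- total size
    rw [stmt_15_swap, Finset.sum_congr rfl (fun t ht => by
      rw [hcol t (Finset.mem_Icc.mp ht).1 (Finset.mem_Icc.mp ht).2]),
      Finset.sum_add_distrib, ← Finset.mul_sum]
    have hA : ∑ t ∈ Icc 1 (2 * m + 1), (x (2 * m + 1 - t) : ℤ)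
        = ∑ i ∈ Finset.range (2 * m + 1), (x i : ℤ) := by
      rw [← Finset.Ico_add_one_right_eq_Icc, Finset.sum_Ico_eq_sum_range]
      have e : 2 * m + 1 + 1 - 1 = 2 * m + 1 := by omega
      rw [e]
      rw [Finset.sum_congr rfl (fun i hi => by
        have : 2 * m + 1 - (1 + i) = 2 * m + 1 - 1 - i := by omega
        rw [this])]
      exact Finset.sum_range_reflect (fun i => (x i : ℤ)) (2 * m + 1)
    have hB : ∑ t ∈ Icc 1 (2 * m + 1), (-1 : ℤ) ^ (t + 1) = 1 := by
      rw [← Finset.Ico_add_one_right_eq_Icc, Finset.sum_Ico_eq_sum_range]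
      have e : 2 * m + 1 + 1 - 1 = 2 * m + 1 := by omega
      rw [e]
      rw [Finset.sum_congr rfl (fun i hi =>
        stmt_15_negpow (1 + i + 1) i (by omega))]
      rw [neg_one_geom_sum, if_neg (by simp [Nat.even_add_one, parity_simps])]
    rw [hA, hB]
  · -- evenness of odd multiplicities
    intro i hi
    rw [hr1 (2 * i + 1) (by omega) (by omega)]
    exact even_two_mul _
end
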